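/- Let S be a nondegenerate TCK family for G on H, and suppose x ∈ S_v H is a wandering vector for the compressed free semigroup algebra on S_v H generated by the operators S_μ|_{S_v H} for cycles μ at v (i.e., {S_μ x : μ a cycle at v} is orthonormal up to the norm of x, meaning ⟨S_μ x, S_ν x⟩ = 0 for distinct cycles μ, ν at v). Then x is a wandering vector for the full family: ⟨S_μ x, S_ν x⟩ = 0 for all distinct paths μ, ν ∈ F_G^+ with source v. -/

import Mathlib

structure DirectedGraph where
  V : Type
  E : Type
  src : E → V
  rng : E → V

namespace DirectedGraph

/-- Two edges are composable (as in `e₂ e₁`, `e₂` after `e₁`) when `s(e₂) = r(e₁)`. -/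
def Composable (G : DirectedGraph) (a b : G.E) : Prop := G.src a = G.rng b

/-- A list `[eₙ, …, e₁]` of edges is a path when consecutive edges are composable. -/
def IsPathList (G : DirectedGraph) (μ : List G.E) : Prop := List.Chain' G.Composable μ

/-- The path `μ` has source `v` (vacuous for the empty path). -/
def SrcIs (G : DirectedGraph) (μ : List G.E) (v : G.V) : Prop :=
  ∀ e ∈ μ.getLast?, G.src e = v

/-- The path `μ`, regarded as a path with source `v`, has range `w`. -/
def RngIs (G : DirectedGraph) (v : G.V) (μ : List G.E) (w : G.V) : Prop :=
  match μ with
  | [] => v = w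
  | e :: _ => G.rng e = w

/-- `μ` is a path with source `v`. -/
def IsPathAt (G : DirectedGraph) (v : G.V) (μ : List G.E) : Prop :=
  G.IsPathList μ ∧ G.SrcIs μ v

/-- `μ` is a cycle at `v` : a path with source and range `v`. -/
def IsCycleAt (G : DirectedGraph) (v : G.V) (μ : List G.E) : Prop :=
  G.IsPathAt v μ ∧ G.RngIs v μ v

end DirectedGraph

/-- A Toeplitz–Cuntz–Krieger family for the directed graph `G` on the Hilbert space `H`:
pairwise orthogonal projections `Sv v`, partial isometries `Se e` with
`(Se e)* (Se e) = Sv (s e)`, and `∑_{e ∈ F} (Se e)(Se e)* ≤ Sv v` for finite `F ⊆ r⁻¹(v)`. -/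
structure TCKFamily (G : DirectedGraph) (H : Type) [NormedAddCommGroup H]
    [InnerProductSpace ℂ H] [CompleteSpace H] where
  Sv : G.V → H →L[ℂ] H
  Se : G.E → H →L[ℂ] H
  sv_sa : ∀ v, IsSelfAdjoint (Sv v)
  sv_idem : ∀ v, Sv v * Sv v = Sv v
  sv_orth : ∀ v w, v ≠ w → Sv v * Sv w = 0
  se_isom : ∀ e, ContinuousLinearMap.adjoint (Se e) * Se e = Sv (G.src e)
  tck_ineq : ∀ (v : G.V) (F : Finset G.E), (∀ e ∈ F, G.rng e = v) →
    ContinuousLinearMap.IsPositive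
      (Sv v - ∑ e ∈ F, Se e * ContinuousLinearMap.adjoint (Se e))

section Aux

open ContinuousLinearMap

variable {H : Type} [NormedAddCommGroup H] [InnerProductSpace ℂ H] [CompleteSpace H]

local notation "⟪" x ", " y "⟫" => @inner ℂ _ _ x y

lemma sa_inner_move {T : H →L[ℂ] H} (hT : IsSelfAdjoint T) (a b : H) :
    ⟪T a, b⟫ = ⟪a, T b⟫ := by
  conv_lhs => rw [← isSelfAdjoint_iff'.mp hT]
  exact adjoint_inner_left T b a

lemma vec_eq_zero_of_re_inner {a : H} (h : RCLike.re ⟪a, a⟫ = 0) : a = 0 := by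
  have h2 : ⟪a, a⟫ = 0 := by rw [← inner_self_ofReal_re, h]; simp
  exact inner_self_eq_zero.mp h2

lemma eq_zero_of_adj_mul_self {B : H →L[ℂ] H}
    (h : ContinuousLinearMap.adjoint B * B = 0) : B = 0 := by
  ext u
  refine vec_eq_zero_of_re_inner ?_
  have h1 : ⟪B u, B u⟫ = 0 := by
    rw [← adjoint_inner_left B u (B u), ← ContinuousLinearMap.mul_apply, h]
    simp
  rw [h1]; simp

/-- If `R`, `P` are self-adjoint idempotents with `R - P` positive, then `R P = P`. -/
lemma proj_absorb {R P : H →L[ℂ] H} (hRsa : IsSelfAdjoint R) (hRi : R * R = R)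
    (hPsa : IsSelfAdjoint P) (hPi : P * P = P) (hpos : (R - P).IsPositive) :
    R * P = P := by
  ext u
  set w := P u with hw
  have hPw : P w = w := by rw [hw, ← ContinuousLinearMap.mul_apply, hPi]
  have hRww : ⟪R w, R w⟫ = ⟪R w, w⟫ := by
    rw [sa_inner_move hRsa, ← ContinuousLinearMap.mul_apply R R, hRi, sa_inner_move hRsa]
  have hsymm : ⟪w, R w⟫ = ⟪R w, w⟫ := (sa_inner_move hRsa w w).symm
  have hQ : ⟪w - R w, w - R w⟫ = ⟪w, w⟫ - ⟪R w, w⟫ := by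
    rw [inner_sub_sub_self, hsymm, hRww]; ring
  have hpos' := hpos.2 w
  rw [reApplyInnerSelf_apply] at hpos'
  have hsub : (R - P) w = R w - w := by rw [sub_apply, hPw]
  rw [hsub, inner_sub_left, map_sub] at hpos'
  have h1 : RCLike.re ⟪w - R w, w - R w⟫ ≤ 0 := by
    rw [hQ, map_sub]; linarith
  have h2 : (0:ℝ) ≤ RCLike.re ⟪w - R w, w - R w⟫ := inner_self_nonneg
  have h3 : w - R w = 0 := vec_eq_zero_of_re_inner (le_antisymm h1 h2)
  have h4 : R w = w := by rwa [sub_eq_zero, eq_comm] at h3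
  simpa [ContinuousLinearMap.mul_apply] using h4

variable {G : DirectedGraph} (S : TCKFamily G H)

/-- `S_e S_{s(e)} = S_e`. -/
lemma se_mul_sv (e : G.E) : S.Se e * S.Sv (G.src e) = S.Se e := by
  set A := S.Se e with hA
  set P := S.Sv (G.src e) with hPdef
  have hP : ContinuousLinearMap.adjoint A * A = P := S.se_isom e
  have hPst : star P = P := (S.sv_sa _).star_eq
  have hPi : P * P = P := S.sv_idem _
  have key : ContinuousLinearMap.adjoint (A * P - A) * (A * P - A) = 0 := by
    simp only [← star_eq_adjoint, star_sub, star_mul, hPst]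
    rw [star_eq_adjoint]
    rw [sub_mul, mul_sub, mul_sub]
    rw [mul_assoc P _ _, ← mul_assoc (ContinuousLinearMap.adjoint A) A P, hP]
    rw [mul_assoc P (adjoint A) A, hP]
    simp only [hPi]
    abel
  have h0 := eq_zero_of_adj_mul_self key
  rwa [sub_eq_zero] at h0

/-- `S_e S_e^* S_e = S_e`. -/
lemma se_adj_se (e : G.E) :
    S.Se e * ContinuousLinearMap.adjoint (S.Se e) * S.Se e = S.Se e := by
  rw [mul_assoc, S.se_isom e, se_mul_sv]

/-- The range projection `P_e = S_e S_e^*`. -/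
noncomputable def Pp (e : G.E) : H →L[ℂ] H :=
  S.Se e * ContinuousLinearMap.adjoint (S.Se e)

lemma Pp_sa (e : G.E) : IsSelfAdjoint (Pp S e) := by
  rw [IsSelfAdjoint, Pp, star_mul, star_eq_adjoint, star_eq_adjoint, adjoint_adjoint]

lemma Pp_idem (e : G.E) : Pp S e * Pp S e = Pp S e := by
  rw [Pp, ← mul_assoc, se_adj_se]

lemma sv_mul_Pp (e : G.E) : S.Sv (G.rng e) * Pp S e = Pp S e := by
  refine proj_absorb (S.sv_sa _) (S.sv_idem _) (Pp_sa S e) (Pp_idem S e) ?_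
  have h := S.tck_ineq (G.rng e) {e} (by simp)
  simpa [Pp] using h

lemma Pp_mul_sv (e : G.E) : Pp S e * S.Sv (G.rng e) = Pp S e := by
  have h := congrArg star (sv_mul_Pp S e)
  rwa [star_mul, (Pp_sa S e).star_eq, (S.sv_sa _).star_eq] at h

lemma sv_mul_se (e : G.E) : S.Sv (G.rng e) * S.Se e = S.Se e := by
  have h1 : Pp S e * S.Se e = S.Se e := by rw [Pp, se_adj_se]
  calc S.Sv (G.rng e) * S.Se e = S.Sv (G.rng e) * (Pp S e * S.Se e) := by rw [h1]
    _ = (S.Sv (G.rng e) * Pp S e) * S.Se e := by rw [mul_assoc]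
    _ = Pp S e * S.Se e := by rw [sv_mul_Pp]
    _ = S.Se e := h1

lemma Pp_orth {e f : G.E} (hef : e ≠ f) : Pp S e * Pp S f = 0 := by
  classical
  by_cases hr : G.rng e = G.rng f
  · have hsum := S.tck_ineq (G.rng e) {e, f} (by
      intro g hg
      rcases Finset.mem_insert.mp hg with h | h
      · rw [h]
      · rw [Finset.mem_singleton.mp h, hr])
    rw [Finset.sum_pair hef] at hsum
    have hpp : ∀ g, S.Se g * ContinuousLinearMap.adjoint (S.Se g) = Pp S g := fun g => rfl
    simp only [hpp] at hsum
    ext u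
    set w := Pp S f u with hw
    have hPw : Pp S f w = w := by rw [hw, ← ContinuousLinearMap.mul_apply, Pp_idem]
    have hRw : S.Sv (G.rng e) w = w := by
      rw [hw, ← ContinuousLinearMap.mul_apply, hr, sv_mul_Pp]
    have hpos' := hsum.2 w
    rw [reApplyInnerSelf_apply] at hpos'
    have hexp : (S.Sv (G.rng e) - (Pp S e + Pp S f)) w = -(Pp S e w) := by
      rw [sub_apply, add_apply, hPw, hRw]; abel
    rw [hexp, inner_neg_left, map_neg] at hpos'
    have hPee : ⟪Pp S e w, Pp S e w⟫ = ⟪Pp S e w, w⟫ := by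
      rw [sa_inner_move (Pp_sa S e), ← ContinuousLinearMap.mul_apply, Pp_idem, sa_inner_move (Pp_sa S e)]
    have h0 : RCLike.re ⟪Pp S e w, Pp S e w⟫ = 0 := by
      have hnn : (0:ℝ) ≤ RCLike.re ⟪Pp S e w, Pp S e w⟫ := inner_self_nonneg
      rw [hPee] at hnn ⊢
      linarith
    have h5 := vec_eq_zero_of_re_inner h0
    simpa [ContinuousLinearMap.mul_apply] using h5
  · have key : Pp S e * (S.Sv (G.rng e) * S.Sv (G.rng f)) * Pp S f
        = Pp S e * Pp S f := by
      rw [← mul_assoc (Pp S e) (S.Sv (G.rng e)) (S.Sv (G.rng f)), Pp_mul_sv,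
        mul_assoc, sv_mul_Pp]
    rw [← key, S.sv_orth _ _ hr]
    simp

lemma inner_se_se {e f : G.E} (hef : e ≠ f) (a b : H) :
    ⟪S.Se e a, S.Se f b⟫ = 0 := by
  have h1 : Pp S e * S.Se e = S.Se e := by rw [Pp, se_adj_se]
  have h2 : Pp S f * S.Se f = S.Se f := by rw [Pp, se_adj_se]
  have ha : S.Se e a = Pp S e (S.Se e a) := by rw [← ContinuousLinearMap.mul_apply, h1]
  have hb : S.Se f b = Pp S f (S.Se f b) := by rw [← ContinuousLinearMap.mul_apply, h2]
  rw [ha, hb, sa_inner_move (Pp_sa S e), ← ContinuousLinearMap.mul_apply, Pp_orth S hef]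
  simp

lemma isPathAt_tail {G : DirectedGraph} {v : G.V} {e : G.E} {μ : List G.E}
    (h : G.IsPathAt v (e :: μ)) : G.IsPathAt v μ := by
  obtain ⟨hc, hs⟩ := h
  refine ⟨hc.tail, ?_⟩
  intro g hg
  apply hs
  cases μ with
  | nil => simp at hg
  | cons b t => rw [List.getLast?_cons_cons]; exact hg

end Aux

/-- The operator associated to a path `μ` with source `v`: the product of the edge
operators along `μ`, with the convention that the empty path at `v` gives `Sv v`. -/
noncomputable def pathOp {G : DirectedGraph} {H : Type} [NormedAddCommGroup H]
    [InnerProductSpace ℂ H] [CompleteSpace H]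
    (S : TCKFamily G H) (v : G.V) (μ : List G.E) : H →L[ℂ] H :=
  match μ with
  | [] => S.Sv v
  | e :: rest => (((e :: rest)).map S.Se).prod

/-- Let `S` be a nondegenerate TCK family and `x ∈ S_v H`. If
`⟨S_μ x, S_ν x⟩ = 0` for all distinct cycles `μ, ν` at `v` (i.e. `x` is wandering for
the compressed free semigroup algebra at `v`), then `⟨S_μ x, S_ν x⟩ = 0` for all
distinct paths `μ, ν` with source `v` (i.e. `x` is wandering for the full family). -/
theorem stmt6 {H : Type} [NormedAddCommGroup H] [InnerProductSpace ℂ H] [CompleteSpace H]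
    (G : DirectedGraph) (S : TCKFamily G H)
    (hnd : ∀ x : H, (∀ v, S.Sv v x = 0) → x = 0)
    {v : G.V} {x : H} (hx : S.Sv v x = x)
    (hwand : ∀ μ ν : List G.E, G.IsCycleAt v μ → G.IsCycleAt v ν → μ ≠ ν →
      (@inner ℂ H _ (pathOp S v μ x) (pathOp S v ν x)) = 0) :
    ∀ μ ν : List G.E, G.IsPathAt v μ → G.IsPathAt v ν → μ ≠ ν →
      (@inner ℂ H _ (pathOp S v μ x) (pathOp S v ν x)) = 0 := by
  classical
  have hy : ∀ μ : List G.E, pathOp S v μ x = (μ.map S.Se).prod x := by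
    intro μ
    cases μ with
    | nil => simpa [pathOp] using hx
    | cons e t => rfl
  have hbase : ∀ (f : G.E) (ν' : List G.E), G.IsPathAt v (f :: ν') →
      (@inner ℂ H _ (((f :: ν').map S.Se).prod x) x) = 0 := by
    intro f ν' hν
    set wv := ((f :: ν').map S.Se).prod x with hwv
    have hw : S.Sv (G.rng f) wv = wv := by
      rw [hwv]
      show S.Sv (G.rng f) ((S.Se f * (ν'.map S.Se).prod) x) = _
      rw [ContinuousLinearMap.mul_apply, ← ContinuousLinearMap.mul_apply (S.Sv (G.rng f)),
        sv_mul_se]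
      rfl
    by_cases h : G.rng f = v
    · have hcyc : G.IsCycleAt v (f :: ν') := ⟨hν, h⟩
      have hnil : G.IsCycleAt v ([] : List G.E) := by
        refine ⟨⟨List.isChain_nil, ?_⟩, rfl⟩
        intro g hg
        simp at hg
      have h0 := hwand (f :: ν') [] hcyc hnil (by simp)
      rw [hy, hy] at h0
      simpa [hwv] using h0
    · calc (@inner ℂ H _ wv x) = @inner ℂ H _ (S.Sv (G.rng f) wv) (S.Sv v x) := by
            rw [hw, hx]
        _ = @inner ℂ H _ wv (S.Sv (G.rng f) (S.Sv v x)) := sa_inner_move (S.sv_sa _) _ _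
        _ = @inner ℂ H _ wv ((S.Sv (G.rng f) * S.Sv v) x) := by
            rw [ContinuousLinearMap.mul_apply]
        _ = 0 := by rw [S.sv_orth _ _ h]; simp
  have main : ∀ μ ν : List G.E, G.IsPathAt v μ → G.IsPathAt v ν → μ ≠ ν →
      (@inner ℂ H _ ((μ.map S.Se).prod x) ((ν.map S.Se).prod x)) = 0 := by
    intro μ
    induction μ with
    | nil =>
      intro ν hμ hν hne
      cases ν with
      | nil => exact absurd rfl hne
      | cons f ν' =>
        rw [inner_eq_zero_symm]
        simpa using hbase f ν' hν
    | cons e μ' ih =>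
      intro ν hμ hν hne
      cases ν with
      | nil => simpa using hbase e μ' hμ
      | cons f ν' =>
        by_cases hef : e = f
        · subst hef
          have hμ' := isPathAt_tail hμ
          have hν' := isPathAt_tail hν
          have hne' : μ' ≠ ν' := fun hh => hne (by rw [hh])
          have step1 : (@inner ℂ H _ (((e :: μ').map S.Se).prod x)
                (((e :: ν').map S.Se).prod x))
              = @inner ℂ H _ ((μ'.map S.Se).prod x)
                (S.Sv (G.src e) ((ν'.map S.Se).prod x)) := by
            show (@inner ℂ H _ ((S.Se e * (μ'.map S.Se).prod) x)
                ((S.Se e * (ν'.map S.Se).prod) x)) = _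
            rw [ContinuousLinearMap.mul_apply, ContinuousLinearMap.mul_apply]
            rw [← ContinuousLinearMap.adjoint_inner_right (S.Se e)]
            rw [← ContinuousLinearMap.mul_apply, S.se_isom]
          rw [step1]
          have habs : S.Sv (G.src e) ((ν'.map S.Se).prod x) = (ν'.map S.Se).prod x := by
            cases ν' with
            | nil =>
              have hsrc : G.src e = v := hν.2 e (by simp)
              rw [hsrc]
              simpa using hx
            | cons g t =>
              have hcomp : G.src e = G.rng g := (List.isChain_cons_cons.mp hν.1).1
              rw [hcomp]
              show S.Sv (G.rng g) ((S.Se g * (t.map S.Se).prod) x) = _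
              rw [ContinuousLinearMap.mul_apply,
                ← ContinuousLinearMap.mul_apply (S.Sv (G.rng g)), sv_mul_se]
              rfl
          rw [habs]
          exact ih ν' hμ' hν' hne'
        · show (@inner ℂ H _ ((S.Se e * (μ'.map S.Se).prod) x)
              ((S.Se f * (ν'.map S.Se).prod) x)) = 0
          rw [ContinuousLinearMap.mul_apply, ContinuousLinearMap.mul_apply]
          exact inner_se_se S hef _ _
  intro μ ν hμ hν hne
  rw [hy, hy]
  exact main μ ν hμ hν hne
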